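/- If n is an odd composite number and a_1, ..., a_k are chosen independently and uniformly at random from {1, ..., n-1}, then the probability that none of them is a Solovay-Strassen witness for the compositeness of n is at most 2^(-k). -/

import Mathlib

/-- The Solovay-Strassen witness predicate. -/
def SSWitness (a n : ℕ) : Prop :=
  1 < Nat.gcd a n ∨ ¬ ((a : ℤ) ^ ((n - 1) / 2) ≡ jacobiSym (a : ℤ) n [ZMOD (n : ℤ)])

private lemma one_add_pow {R : Type*} [CommRing R] (x : R) (hx : x ^ 2 = 0) (m : ℕ) :
    (1 + x) ^ m = 1 + m * x := by
  induction m with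
  | zero => simp
  | succ m ih =>
    rw [pow_succ, ih]
    push_cast
    ring_nf
    rw [hx]
    ring

private lemma jac_val_mul {n : ℕ} (x y : ZMod n) :
    jacobiSym ((x * y).val : ℤ) n = jacobiSym (x.val : ℤ) n * jacobiSym (y.val : ℤ) n := by
  rw [← jacobiSym.mul_left]
  apply jacobiSym.mod_left'
  rw [ZMod.val_mul]
  push_cast
  rw [Int.emod_emod_of_dvd _ dvd_rfl]

private lemma jac_sq {n : ℕ} (u : (ZMod n)ˣ) :
    jacobiSym ((u : ZMod n).val : ℤ) n * jacobiSym ((u : ZMod n).val : ℤ) n = 1 := by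
  have h := ZMod.val_coe_unit_coprime u
  have := jacobiSym.sq_one (a := ((u : ZMod n).val : ℤ)) (b := n)
    (by rwa [Int.gcd_natCast_natCast])
  rwa [sq] at this

/-- The subgroup of non-witness residues. -/
noncomputable def ssGroup (n : ℕ) [NeZero n] : Subgroup (ZMod n)ˣ where
  carrier := {u | (u : ZMod n) ^ ((n - 1) / 2) = ((jacobiSym ((u : ZMod n).val : ℤ) n : ℤ) : ZMod n)}
  one_mem' := by
    simp only [Set.mem_setOf_eq, Units.val_one, one_pow]
    rcases eq_or_lt_of_le (Nat.one_le_iff_ne_zero.2 (NeZero.ne n)) with h | h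
    · have : Subsingleton (ZMod n) := by rw [← h]; infer_instance
      exact Subsingleton.elim _ _
    · rw [ZMod.val_one_eq_one_mod, Nat.mod_eq_of_lt h]
      simp [jacobiSym.one_left]
  mul_mem' := by
    intro x y hx hy
    simp only [Set.mem_setOf_eq, Units.val_mul] at *
    rw [mul_pow, hx, hy, jac_val_mul]
    push_cast
    ring
  inv_mem' := by
    intro x hx
    simp only [Set.mem_setOf_eq] at *
    have hinv : jacobiSym (((x⁻¹ : (ZMod n)ˣ) : ZMod n).val : ℤ) n
        = jacobiSym ((x : ZMod n).val : ℤ) n := by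
      have h1 : jacobiSym (((x * x⁻¹ : (ZMod n)ˣ) : ZMod n).val : ℤ) n = 1 := by
        rw [mul_inv_cancel]
        show jacobiSym (((1 : (ZMod n)ˣ) : ZMod n).val : ℤ) n = 1
        rcases eq_or_lt_of_le (Nat.one_le_iff_ne_zero.2 (NeZero.ne n)) with h | h
        · rw [← h]; simp [jacobiSym]
        · rw [Units.val_one, ZMod.val_one_eq_one_mod, Nat.mod_eq_of_lt h]
          simp [jacobiSym.one_left]
      rw [Units.val_mul, jac_val_mul] at h1
      have h2 := jac_sq x
      rcases Int.isUnit_iff.mp (IsUnit.of_mul_eq_one _ h2) with h | h <;>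
        rw [h] at h1 ⊢ <;> omega
    rw [hinv, ← hx]
    have key : ((x⁻¹ : (ZMod n)ˣ) : ZMod n) ^ ((n-1)/2) * ((x : (ZMod n)ˣ) : ZMod n) ^ ((n-1)/2) = 1 := by
      rw [← mul_pow, ← Units.val_mul, inv_mul_cancel, Units.val_one, one_pow]
    calc ((x⁻¹ : (ZMod n)ˣ) : ZMod n) ^ ((n-1)/2)
        = ((x⁻¹ : (ZMod n)ˣ) : ZMod n) ^ ((n-1)/2) *
            (((x : (ZMod n)ˣ) : ZMod n) ^ ((n-1)/2) * ((x : (ZMod n)ˣ) : ZMod n) ^ ((n-1)/2)) := by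
          rw [hx, ← Int.cast_mul, jac_sq, Int.cast_one, mul_one]
      _ = ((x : (ZMod n)ˣ) : ZMod n) ^ ((n-1)/2) := by rw [← mul_assoc, key, one_mul]

private lemma case2 (p m : ℕ) (pp : p.Prime) (hp2 : p ≠ 2) (hm3 : 2 < m) (hco : p.Coprime m) :
    ∃ a : ZMod (p * m), IsUnit a ∧
      ¬ (a ^ ((p * m - 1) / 2) = ((jacobiSym (a.val : ℤ) (p * m) : ℤ) : ZMod (p * m))) := by
  haveI : Fact p.Prime := ⟨pp⟩
  haveI : NeZero m := ⟨by omega⟩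
  haveI : NeZero (p * m) := ⟨by have := pp.pos; positivity⟩
  obtain ⟨b, hb⟩ := FiniteField.exists_nonsquare (F := ZMod p)
    (by rw [ZMod.ringChar_zmod_n]; exact hp2)
  have hb0 : b ≠ 0 := fun h => hb (h ▸ ⟨0, (mul_zero 0).symm⟩)
  set iso := ZMod.chineseRemainder hco with hiso
  set a : ZMod (p * m) := iso.symm (b, 1) with ha
  have key : ((a.val : ZMod p), (a.val : ZMod m)) = (b, 1) := by
    have h1 : iso a = (b, 1) := iso.apply_symm_apply _
    have h2 : iso a = ((a.val : ZMod p), (a.val : ZMod m)) := by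
      show ZMod.castHom (show Nat.lcm p m ∣ p * m by simp [Nat.lcm_dvd_iff])
        (ZMod p × ZMod m) a = _
      rw [ZMod.castHom_apply, ← ZMod.natCast_val]
      rfl
    rw [← h1, h2]
  have ha1 : (a.val : ZMod p) = b := congrArg Prod.fst key
  have ha2 : (a.val : ZMod m) = 1 := congrArg Prod.snd key
  have hu : IsUnit a := by
    have hbu : IsUnit ((b, 1) : ZMod p × ZMod m) :=
      ⟨⟨(b, 1), (b⁻¹, 1), by simp [Prod.ext_iff, mul_inv_cancel₀ hb0],
        by simp [Prod.ext_iff, inv_mul_cancel₀ hb0]⟩, rfl⟩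
    exact hbu.map iso.symm
  refine ⟨a, hu, ?_⟩
  have hJp : jacobiSym (a.val : ℤ) p = -1 := by
    rw [ZMod.nonsquare_iff_jacobiSym_eq_neg_one]
    rwa [Int.cast_natCast, ha1]
  have hJm : jacobiSym (a.val : ℤ) m = 1 := by
    have hmod : a.val ≡ 1 [MOD m] :=
      (ZMod.natCast_eq_natCast_iff a.val 1 m).mp (by rw [ha2]; norm_num)
    have hint : (a.val : ℤ) % m = 1 % m := by
      have := congrArg (fun x : ℕ => (x : ℤ)) hmod
      push_cast at this
      simpa using this
    rw [jacobiSym.mod_left' hint, jacobiSym.one_left]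
  have hJ : jacobiSym (a.val : ℤ) (p * m) = -1 := by
    rw [jacobiSym.mul_right, hJp, hJm]; ring
  rw [hJ]
  intro hcon
  have hdvd : m ∣ p * m := dvd_mul_left m p
  have hφ := congrArg (ZMod.castHom hdvd (ZMod m)) hcon
  rw [map_pow] at hφ
  have hca : ZMod.castHom hdvd (ZMod m) a = (a.val : ZMod m) := by
    rw [ZMod.castHom_apply, ← ZMod.natCast_val]
  rw [hca, ha2, one_pow] at hφ
  have h20 : ((2 : ℕ) : ZMod m) = 0 := by
    have h1 : (-1 : ZMod m) = 1 := by
      have h2 := hφ.symm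
      rwa [map_intCast, Int.cast_neg, Int.cast_one] at h2
    push_cast
    linear_combination -h1
  rw [ZMod.natCast_eq_zero_iff] at h20
  have := Nat.le_of_dvd (by norm_num) h20
  omega

private lemma case1 (n : ℕ) (h1 : 1 < n) (p : ℕ) (pp : p.Prime) (hsq : p * p ∣ n) :
    ∃ a : ZMod n, IsUnit a ∧ a ^ (n - 1) ≠ 1 := by
  haveI : NeZero n := ⟨by omega⟩
  obtain ⟨m, hm⟩ := hsq
  have hm0 : m ≠ 0 := by rintro rfl; simp at hm; omega
  set x : ZMod n := ((p * m : ℕ) : ZMod n) with hxdef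
  have hx2 : x ^ 2 = 0 := by
    have : ((p * m) * (p * m) : ℕ) = n * m := by rw [hm]; ring
    rw [sq, ← Nat.cast_mul, this]
    push_cast
    simp [ZMod.natCast_self]
  set a : ZMod n := 1 + x with hadef
  have hap : a ^ p = 1 := by
    rw [one_add_pow x hx2 p, ← Nat.cast_mul]
    have : (p * (p * m) : ℕ) = n := by rw [hm]; ring
    rw [this]
    simp [ZMod.natCast_self]
  have hane : a ≠ 1 := by
    intro h
    have hx0 : x = 0 := by rwa [hadef, add_eq_left] at h
    rw [hxdef, ZMod.natCast_eq_zero_iff] at hx0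
    have hlt : p * m < n := by
      rw [hm]
      have hpm : 0 < p * m := Nat.pos_of_ne_zero (Nat.mul_ne_zero pp.pos.ne' hm0)
      have := pp.one_lt
      nlinarith
    have hpos : 0 < p * m := Nat.pos_of_ne_zero (Nat.mul_ne_zero pp.pos.ne' hm0)
    exact absurd (Nat.le_of_dvd hpos hx0) (by omega)
  have hu : IsUnit a := by
    refine ⟨⟨a, a ^ (p - 1), ?_, ?_⟩, rfl⟩
    · rw [← pow_succ', show p - 1 + 1 = p from by have := pp.pos; omega]
      exact hap
    · rw [← pow_succ, show p - 1 + 1 = p from by have := pp.pos; omega]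
      exact hap
  refine ⟨a, hu, fun hcon => ?_⟩
  have hd1 : orderOf a ∣ p := orderOf_dvd_of_pow_eq_one hap
  have hd2 : orderOf a ∣ n - 1 := orderOf_dvd_of_pow_eq_one hcon
  rcases (Nat.Prime.eq_one_or_self_of_dvd pp _ hd1) with h | h
  · exact hane (orderOf_eq_one_iff.mp h)
  · rw [h] at hd2
    have hpn : p ∣ n := ⟨p * m, by rw [hm]; ring⟩
    have := Nat.dvd_sub hpn hd2
    rw [show n - (n - 1) = 1 by omega] at this
    exact pp.one_lt.ne' (Nat.eq_one_of_dvd_one this)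

private lemma exists_witness (n : ℕ) (hodd : Odd n) (h1 : 1 < n) (hcomp : ¬ n.Prime) :
    ∃ a : ZMod n, IsUnit a ∧
      ¬ (a ^ ((n - 1) / 2) = ((jacobiSym (a.val : ℤ) n : ℤ) : ZMod n)) := by
  haveI : NeZero n := ⟨by omega⟩
  have hn2 : ¬ (2 ∣ n) := by
    rw [Nat.two_dvd_ne_zero]
    exact Nat.odd_iff.mp hodd
  by_cases hsf : Squarefree n
  · obtain ⟨q, hq⟩ : ∃ q, q = n.minFac := ⟨_, rfl⟩
    have pp : q.Prime := hq ▸ Nat.minFac_prime (by omega)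
    obtain ⟨m, hn⟩ : q ∣ n := hq ▸ n.minFac_dvd
    have hm0 : m ≠ 0 := by rintro rfl; rw [mul_zero] at hn; omega
    have hm1 : m ≠ 1 := by
      intro h
      rw [h, mul_one] at hn
      exact hcomp (hn ▸ pp)
    have hm2 : m ≠ 2 := by
      intro h
      rw [h] at hn
      exact hn2 ⟨q, by omega⟩
    have hp2 : q ≠ 2 := by
      rintro rfl
      exact hn2 ⟨m, hn⟩
    have hco : q.Coprime m := by
      rw [Nat.Prime.coprime_iff_not_dvd pp]
      intro hdvd
      obtain ⟨c, hc⟩ := hdvd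
      have hsq : q * q ∣ n := ⟨c, by rw [hn, hc]; ring⟩
      exact pp.one_lt.ne' (Nat.isUnit_iff.mp (hsf _ hsq))
    rw [hn]
    exact case2 q m pp hp2 (by omega) hco
  · rw [Nat.squarefree_iff_prime_squarefree] at hsf
    push_neg at hsf
    obtain ⟨p, pp, hsq⟩ := hsf
    obtain ⟨a, hu, hne⟩ := case1 n h1 p pp hsq
    refine ⟨a, hu, fun hx => hne ?_⟩
    rw [← hu.unit_spec] at hx ⊢
    obtain ⟨c, hc⟩ := hodd
    have hn1 : n - 1 = ((n - 1) / 2) * 2 := by omega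
    rw [hn1, pow_mul, hx, sq, ← Int.cast_mul, jac_sq, Int.cast_one]

open Classical in
private lemma key (n : ℕ) (hodd : Odd n) (h1 : 1 < n) (hcomp : ¬ n.Prime) :
    2 * ((Finset.Ico 1 n).filter fun a => ¬ SSWitness a n).card ≤ n - 1 := by
  haveI : NeZero n := ⟨by omega⟩
  set H := ssGroup n with hH
  obtain ⟨a₀, hu₀, hne₀⟩ := exists_witness n hodd h1 hcomp
  have hHne : H ≠ ⊤ := by
    intro htop
    apply hne₀
    have hmem : hu₀.unit ∈ H := htop ▸ Subgroup.mem_top _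
    have hx : (hu₀.unit : ZMod n) ^ ((n - 1) / 2)
        = ((jacobiSym (((hu₀.unit : ZMod n)).val : ℤ) n : ℤ) : ZMod n) := hmem
    rwa [hu₀.unit_spec] at hx
  have hGH : 2 * Nat.card H ≤ Nat.card (ZMod n)ˣ := by
    have hmul := Subgroup.card_mul_index H
    have hidx : 1 < H.index := Subgroup.one_lt_index_of_ne_top hHne
    calc 2 * Nat.card H = Nat.card H * 2 := mul_comm _ _
      _ ≤ Nat.card H * H.index := Nat.mul_le_mul_left _ hidx
      _ = Nat.card (ZMod n)ˣ := hmul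
  have hGle : Nat.card (ZMod n)ˣ ≤ n - 1 := by
    rw [Nat.card_eq_fintype_card, ZMod.card_units_eq_totient]
    have := Nat.totient_lt n h1
    omega
  have hcardt : (Finset.univ.filter (fun u => u ∈ H)).card = Nat.card H := by
    rw [Nat.card_eq_fintype_card]
    exact (Fintype.card_subtype _).symm
  have hunit : ∀ a ∈ (Finset.Ico 1 n).filter (fun a => ¬ SSWitness a n),
      IsUnit ((a : ZMod n)) := by
    intro a ha
    rw [Finset.mem_filter, Finset.mem_Ico] at ha
    obtain ⟨⟨ha1, ha2⟩, hw⟩ := ha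
    rw [SSWitness, not_or, not_not] at hw
    have hg : Nat.gcd a n = 1 := by
      have h0 : Nat.gcd a n ≠ 0 := fun h => by
        rcases Nat.gcd_eq_zero_iff.mp h with ⟨-, h'⟩; omega
      omega
    exact (ZMod.isUnit_iff_coprime a n).mpr hg
  have hS : ((Finset.Ico 1 n).filter fun a => ¬ SSWitness a n).card ≤ Nat.card H := by
    rw [← hcardt]
    refine Finset.card_le_card_of_injOn
      (fun a => if h : IsUnit ((a : ZMod n)) then h.unit else 1) ?_ ?_
    · intro a ha
      have hisu := hunit a ha
      rw [Finset.mem_coe, Finset.mem_filter, Finset.mem_Ico] at ha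
      obtain ⟨⟨ha1, ha2⟩, hw⟩ := ha
      rw [SSWitness, not_or, not_not] at hw
      simp only [Finset.mem_coe, Finset.mem_filter, Finset.mem_univ, true_and]
      rw [dif_pos hisu]
      show (hisu.unit : ZMod n) ^ ((n - 1) / 2)
        = ((jacobiSym (((hisu.unit : ZMod n)).val : ℤ) n : ℤ) : ZMod n)
      rw [hisu.unit_spec, ZMod.val_natCast_of_lt ha2]
      have hmeq := (ZMod.intCast_eq_intCast_iff _ _ _).mpr hw.2
      push_cast at hmeq
      exact hmeq
    · intro a ha b hb heq
      have hisa := hunit a ha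
      have hisb := hunit b hb
      simp only [dif_pos hisa, dif_pos hisb] at heq
      have hval : (a : ZMod n) = (b : ZMod n) := by
        have := congrArg (fun u : (ZMod n)ˣ => (u : ZMod n)) heq
        simpa [hisa.unit_spec, hisb.unit_spec] using this
      rw [Finset.coe_filter, Set.mem_setOf_eq, Finset.mem_Ico] at ha hb
      have := congrArg ZMod.val hval
      rwa [ZMod.val_natCast_of_lt ha.1.2, ZMod.val_natCast_of_lt hb.1.2] at this
  omega

/-- If `n` is odd and composite, the probability that `k` independent uniform choices from
`{1, ..., n-1}` are all non-witnesses is at most `2⁻ᵏ`: the number of such `k`-tuples,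
multiplied by `2^k`, is at most the total number `(n-1)^k` of `k`-tuples. -/
theorem stmt10 (n : ℕ) (hodd : Odd n) (h1 : 1 < n) (hcomp : ¬ n.Prime) (k : ℕ) :
    2 ^ k * Set.ncard {f : Fin k → ℕ |
        (∀ i, 1 ≤ f i ∧ f i ≤ n - 1) ∧ ∀ i, ¬ SSWitness (f i) n} ≤ (n - 1) ^ k := by
  classical
  have hkey := key n hodd h1 hcomp
  set S := (Finset.Ico 1 n).filter (fun a => ¬ SSWitness a n) with hSdef
  have hset : {f : Fin k → ℕ | (∀ i, 1 ≤ f i ∧ f i ≤ n - 1) ∧ ∀ i, ¬ SSWitness (f i) n}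
      = ↑(Fintype.piFinset fun _ : Fin k => S) := by
    ext f
    simp only [Set.mem_setOf_eq, Finset.mem_coe, Fintype.mem_piFinset, hSdef,
      Finset.mem_filter, Finset.mem_Ico]
    constructor
    · rintro ⟨hA, hB⟩ i
      exact ⟨⟨(hA i).1, by have := (hA i).2; omega⟩, hB i⟩
    · intro h
      exact ⟨fun i => ⟨(h i).1.1, by have := (h i).1.2; omega⟩, fun i => (h i).2⟩
  rw [hset, Set.ncard_coe_finset, Fintype.card_piFinset]
  simp only [Finset.prod_const, Finset.card_univ, Fintype.card_fin]
  rw [← mul_pow]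
  exact Nat.pow_le_pow_left (by omega) k
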